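/- With the weights w(γ) = δ^{|M_0(γ)|}(1−δ)^{|M_1(γ)|} · Ψ_γ(e^g) / μ^{⊗T}(e^g) arising from reweighting the product decomposition by e^g, if for every coordinate i the single-coordinate-improved quotient satisfies (μ ⊗ … ⊗ ν ⊗ … ⊗ μ)(e^g) / μ^{⊗T}(e^g) ≥ 1 (with ν in position i), then Σ_γ w(γ)|M_1(γ)| ≥ T(1−δ). -/

import Mathlib

open MeasureTheory

lemma pi_decomp {Ω : Type*} [MeasurableSpace Ω] (T : ℕ)
    (c : Fin T → Bool → ENNReal) (hc : ∀ j b, c j b ≠ ⊤)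
    (ρ : Fin T → Bool → Measure Ω) (hρ : ∀ j b, IsFiniteMeasure (ρ j b)) :
    Measure.pi (fun j => c j true • ρ j true + c j false • ρ j false) =
      ∑ γ : Fin T → Bool, (∏ j, c j (γ j)) • Measure.pi (fun j => ρ j (γ j)) := by
  haveI := hρ
  have hfin : ∀ j, IsFiniteMeasure (c j true • ρ j true + c j false • ρ j false) := by
    intro j
    have : IsFiniteMeasure (c j true • ρ j true) := ⟨by
      simp [Measure.smul_apply, ENNReal.mul_lt_top (hc j true).lt_top (measure_lt_top _ _)]⟩
    have : IsFiniteMeasure (c j false • ρ j false) := ⟨by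
      simp [Measure.smul_apply, ENNReal.mul_lt_top (hc j false).lt_top (measure_lt_top _ _)]⟩
    infer_instance
  haveI := hfin
  apply Measure.pi_eq
  intro s hs
  simp only [Measure.coe_finset_sum, Finset.sum_apply, Measure.smul_apply, smul_eq_mul,
    Measure.pi_pi, Measure.add_apply]
  have : ∀ γ : Fin T → Bool, (∏ j, c j (γ j)) * ∏ j, (ρ j (γ j)) (s j)
      = ∏ j, c j (γ j) * (ρ j (γ j)) (s j) := fun γ => (Finset.prod_mul_distrib).symm
  simp_rw [this]
  rw [← Fintype.prod_sum (fun j b => c j b * (ρ j b) (s j))]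
  exact Finset.prod_congr rfl fun j _ => Fintype.sum_bool _

lemma prod_ite_pow {M : Type*} [CommMonoid M] (T : ℕ) (γ : Fin T → Bool) (a b : M) :
    (∏ j, (if γ j then b else a)) =
      a ^ (Finset.univ.filter (fun i => γ i = false)).card *
      b ^ (Finset.univ.filter (fun i => γ i = true)).card := by
  classical
  rw [Finset.prod_ite, Finset.prod_const, Finset.prod_const, mul_comm]
  congr 3
  ext j
  simp

theorem stmt_14 {Ω : Type*} [MeasurableSpace Ω]
    (μ ν νbar : Measure Ω) [IsProbabilityMeasure μ]
    [IsProbabilityMeasure ν] [IsProbabilityMeasure νbar]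
    (δ : ℝ) (hδ0 : 0 ≤ δ) (hδ1 : δ ≤ 1)
    (hmix : μ = ENNReal.ofReal (1 - δ) • ν + ENNReal.ofReal δ • νbar)
    (T : ℕ) (g : (Fin T → Ω) → ℝ) (hgmeas : Measurable g)
    (hgbd : ∃ M : ℝ, ∀ x, g x ≤ M)
    (hpos : 0 < ∫⁻ x, ENNReal.ofReal (Real.exp (g x)) ∂(Measure.pi fun _ : Fin T => μ))
    (hfin : (∫⁻ x, ENNReal.ofReal (Real.exp (g x)) ∂(Measure.pi fun _ : Fin T => μ)) < ⊤)
    (hGCI : ∀ i : Fin T,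
      (∫⁻ x, ENNReal.ofReal (Real.exp (g x)) ∂(Measure.pi fun _ : Fin T => μ)) ≤
        ∫⁻ x, ENNReal.ofReal (Real.exp (g x))
          ∂(Measure.pi fun j : Fin T => if j = i then ν else μ)) :
    ENNReal.ofReal ((T : ℝ) * (1 - δ)) ≤
      ∑ γ : Fin T → Bool,
        (ENNReal.ofReal δ ^ (Finset.univ.filter (fun i => γ i = false)).card *
            ENNReal.ofReal (1 - δ) ^ (Finset.univ.filter (fun i => γ i = true)).card *
            (∫⁻ x, ENNReal.ofReal (Real.exp (g x))
              ∂(Measure.pi fun i : Fin T => if γ i then ν else νbar)) /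
            (∫⁻ x, ENNReal.ofReal (Real.exp (g x)) ∂(Measure.pi fun _ : Fin T => μ))) *
          ((Finset.univ.filter (fun i => γ i = true)).card : ENNReal) := by
  classical
  set F : (Fin T → Ω) → ENNReal := fun x => ENNReal.ofReal (Real.exp (g x)) with hF
  set Z := ∫⁻ x, F x ∂(Measure.pi fun _ : Fin T => μ) with hZ
  have hδ' : (0:ℝ) ≤ 1 - δ := by linarith
  set W : (Fin T → Bool) → ENNReal := fun γ =>
    ENNReal.ofReal δ ^ (Finset.univ.filter (fun i => γ i = false)).card *
      ENNReal.ofReal (1 - δ) ^ (Finset.univ.filter (fun i => γ i = true)).card *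
      (∫⁻ x, F x ∂(Measure.pi fun i : Fin T => if γ i then ν else νbar)) with hWdef
  have key : ∀ i : Fin T,
      ENNReal.ofReal (1 - δ) *
          ∫⁻ x, F x ∂(Measure.pi fun j : Fin T => if j = i then ν else μ)
        = ∑ γ : Fin T → Bool, (if γ i then W γ else 0) := by
    intro i
    have hρ : ∀ (j : Fin T) (b : Bool),
        IsFiniteMeasure ((fun (_ : Fin T) (b : Bool) => if b then ν else νbar) j b) := by
      intro j b; cases b <;> simp <;> infer_instance
    have hdecomp := pi_decomp T
      (fun j b => if j = i then (if b then 1 else 0)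
        else (if b then ENNReal.ofReal (1-δ) else ENNReal.ofReal δ))
      (fun j b => by split_ifs <;> simp)
      (fun _ b => if b then ν else νbar) hρ
    have hm : (Measure.pi fun j : Fin T => if j = i then ν else μ)
        = ∑ γ : Fin T → Bool,
            (∏ j, if j = i then (if γ j then 1 else 0)
              else (if γ j then ENNReal.ofReal (1-δ) else ENNReal.ofReal δ)) •
            Measure.pi (fun j => if γ j then ν else νbar) := by
      rw [← hdecomp]
      congr 1
      funext j
      by_cases hj : j = i
      · simp [hj]
      · simp [hj]
        exact hmix
    rw [hm, lintegral_finset_sum_measure, Finset.mul_sum]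
    refine Finset.sum_congr rfl fun γ _ => ?_
    rw [lintegral_smul_measure, smul_eq_mul]
    by_cases hγi : γ i
    · rw [if_pos hγi, hWdef]
      have h1 : (∏ j, if j = i then (if γ j then 1 else 0)
          else (if γ j then ENNReal.ofReal (1-δ) else ENNReal.ofReal δ))
          = ∏ j ∈ Finset.univ.erase i,
            (if γ j then ENNReal.ofReal (1-δ) else ENNReal.ofReal δ) := by
        rw [← Finset.mul_prod_erase Finset.univ _ (Finset.mem_univ i)]
        rw [if_pos rfl, if_pos hγi, one_mul]
        exact Finset.prod_congr rfl fun j hj => by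
          rw [if_neg (Finset.mem_erase.mp hj).1]
      have h2 : ENNReal.ofReal δ ^ (Finset.univ.filter (fun k => γ k = false)).card *
            ENNReal.ofReal (1 - δ) ^ (Finset.univ.filter (fun k => γ k = true)).card
          = ∏ j, (if γ j then ENNReal.ofReal (1-δ) else ENNReal.ofReal δ) := by
        rw [prod_ite_pow]
      rw [h1, ← mul_assoc]
      congr 1
      rw [h2, ← Finset.mul_prod_erase Finset.univ _ (Finset.mem_univ i), if_pos hγi]
    · rw [if_neg hγi]
      have : (∏ j, if j = i then (if γ j then 1 else 0)
          else (if γ j then ENNReal.ofReal (1-δ) else ENNReal.ofReal δ)) = 0 := by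
        apply Finset.prod_eq_zero (Finset.mem_univ i)
        simp [hγi]
      rw [this]
      ring
  -- rearrange the target sum
  have hrearrange :
      (∑ γ : Fin T → Bool, (W γ / Z) * ((Finset.univ.filter (fun i => γ i = true)).card : ENNReal))
        = ∑ i : Fin T, (∑ γ : Fin T → Bool, (if γ i then W γ else 0)) / Z := by
    have hcard : ∀ γ : Fin T → Bool,
        ((Finset.univ.filter (fun i => γ i = true)).card : ENNReal)
          = ∑ i : Fin T, (if γ i then 1 else 0) := by
      intro γ
      rw [Finset.card_filter]
      push_cast
      exact Finset.sum_congr rfl fun i _ => by by_cases h : γ i <;> simp [h]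
    calc (∑ γ : Fin T → Bool, (W γ / Z) * ((Finset.univ.filter (fun i => γ i = true)).card : ENNReal))
        = ∑ γ : Fin T → Bool, ∑ i : Fin T, (if γ i then W γ else 0) / Z := by
          refine Finset.sum_congr rfl fun γ _ => ?_
          rw [hcard, Finset.mul_sum]
          refine Finset.sum_congr rfl fun i _ => ?_
          by_cases h : γ i <;> simp [h]
      _ = ∑ i : Fin T, ∑ γ : Fin T → Bool, (if γ i then W γ else 0) / Z := Finset.sum_comm
      _ = ∑ i : Fin T, (∑ γ : Fin T → Bool, (if γ i then W γ else 0)) / Z := by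
          refine Finset.sum_congr rfl fun i _ => ?_
          simp only [div_eq_mul_inv]
          rw [Finset.sum_mul]
  rw [hrearrange]
  have hlhs : ENNReal.ofReal ((T : ℝ) * (1 - δ))
      = ∑ _i : Fin T, ENNReal.ofReal (1 - δ) := by
    rw [ENNReal.ofReal_mul (by positivity), Finset.sum_const, Finset.card_univ,
      Fintype.card_fin, nsmul_eq_mul, ENNReal.ofReal_natCast]
  rw [hlhs]
  refine Finset.sum_le_sum fun i _ => ?_
  rw [← key i]
  have h1 : ENNReal.ofReal (1-δ) * Z ≤ ENNReal.ofReal (1-δ) *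
      ∫⁻ x, F x ∂(Measure.pi fun j : Fin T => if j = i then ν else μ) :=
    mul_le_mul_right (hGCI i) _
  calc ENNReal.ofReal (1-δ) = ENNReal.ofReal (1-δ) * Z / Z := by
        rw [mul_div_assoc, ENNReal.div_self hpos.ne' hfin.ne, mul_one]
    _ ≤ _ := ENNReal.div_le_div_right h1 Z
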